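/- Let ε be a primitive ℓ-th root of unity (ℓ > 1) in a field k, let T = T_ℓ(ε) be the Taft algebra k⟨g, x⟩/(g^ℓ = 1, x^ℓ = 0, g x = ε x g), and let K = k[g] ≅ k C_ℓ be the group-algebra Hopf subalgebra. Then any K-K-bimodule map tr : T → K satisfies tr(x^i) = 0 for all 1 ≤ i ≤ ℓ−1; consequently tr((−)·x) = 0 and no K-K-bimodule map tr : T → K can induce a bijection T → Hom_K(T, K), h ↦ tr((−)h). Hence induction and coinduction along K ↪ T are not isomorphic. -/

import Mathlib

variable {k : Type*} [Field k]

/-- The defining relations of the Taft algebra `T_ℓ(ε)`: `g^ℓ = 1`, `x^ℓ = 0` and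
`g x = ε x g`, where `g` and `x` are the two generators. -/
inductive TaftRel (k : Type*) [Field k] (ε : k) (ℓ : ℕ) :
    FreeAlgebra k (Fin 2) → FreeAlgebra k (Fin 2) → Prop
  | g_pow : TaftRel k ε ℓ ((FreeAlgebra.ι k (0 : Fin 2)) ^ ℓ) 1
  | x_pow : TaftRel k ε ℓ ((FreeAlgebra.ι k (1 : Fin 2)) ^ ℓ) 0
  | comm : TaftRel k ε ℓ (FreeAlgebra.ι k (0 : Fin 2) * FreeAlgebra.ι k (1 : Fin 2))
      (ε • (FreeAlgebra.ι k (1 : Fin 2) * FreeAlgebra.ι k (0 : Fin 2)))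

/-- The Taft algebra `T_ℓ(ε) = k⟨g, x⟩/(g^ℓ = 1, x^ℓ = 0, g x = ε x g)`. -/
abbrev Taft (k : Type*) [Field k] (ε : k) (ℓ : ℕ) := RingQuot (TaftRel k ε ℓ)

/-- The grouplike generator `g` of the Taft algebra. -/
noncomputable def Taft.g (ε : k) (ℓ : ℕ) : Taft k ε ℓ :=
  RingQuot.mkRingHom (TaftRel k ε ℓ) (FreeAlgebra.ι k (0 : Fin 2))

/-- The skew-primitive generator `x` of the Taft algebra. -/
noncomputable def Taft.x (ε : k) (ℓ : ℕ) : Taft k ε ℓ :=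
  RingQuot.mkRingHom (TaftRel k ε ℓ) (FreeAlgebra.ι k (1 : Fin 2))

/-- The group-algebra subalgebra `K = k[g] ≅ k C_ℓ` of the Taft algebra. -/
noncomputable def Taft.K (ε : k) (ℓ : ℕ) : Subalgebra k (Taft k ε ℓ) :=
  Algebra.adjoin k {Taft.g ε ℓ}

namespace TaftAux

variable (ε : k) (ℓ : ℕ)

lemma g_def : Taft.g ε ℓ = RingQuot.mkAlgHom k (TaftRel k ε ℓ) (FreeAlgebra.ι k (0 : Fin 2)) := by
  rw [Taft.g, ← RingQuot.mkAlgHom_coe k (TaftRel k ε ℓ)]; rfl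

lemma x_def : Taft.x ε ℓ = RingQuot.mkAlgHom k (TaftRel k ε ℓ) (FreeAlgebra.ι k (1 : Fin 2)) := by
  rw [Taft.x, ← RingQuot.mkAlgHom_coe k (TaftRel k ε ℓ)]; rfl

lemma gx : Taft.g ε ℓ * Taft.x ε ℓ = ε • (Taft.x ε ℓ * Taft.g ε ℓ) := by
  rw [g_def, x_def, ← map_mul, ← map_mul, ← map_smul,
    RingQuot.mkAlgHom_rel k TaftRel.comm]

lemma g_pow : Taft.g ε ℓ ^ ℓ = 1 := by
  rw [g_def, ← map_pow, RingQuot.mkAlgHom_rel k TaftRel.g_pow, map_one]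

lemma x_pow : Taft.x ε ℓ ^ ℓ = 0 := by
  rw [x_def, ← map_pow, RingQuot.mkAlgHom_rel k TaftRel.x_pow, map_zero]

lemma g_xpow (i : ℕ) :
    Taft.g ε ℓ * Taft.x ε ℓ ^ i = (ε ^ i) • (Taft.x ε ℓ ^ i * Taft.g ε ℓ) := by
  induction i with
  | zero => simp
  | succ i ih =>
    rw [pow_succ', ← mul_assoc, gx, smul_mul_assoc, mul_assoc, ih, mul_smul_comm,
      smul_smul, ← mul_assoc, ← pow_succ', ← pow_succ']

lemma gpow_xpow (m i : ℕ) :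
    Taft.g ε ℓ ^ m * Taft.x ε ℓ ^ i = (ε ^ (m * i)) • (Taft.x ε ℓ ^ i * Taft.g ε ℓ ^ m) := by
  induction m with
  | zero => simp
  | succ m ih =>
    rw [pow_succ', mul_assoc, ih, mul_smul_comm, ← mul_assoc, g_xpow, smul_mul_assoc,
      smul_smul, mul_assoc, ← pow_succ', ← pow_add]
    ring_nf



lemma x_ne_zero (hℓ : 1 < ℓ) (hε1 : ε ^ ℓ = 1) : Taft.x ε ℓ ≠ 0 := by
  classical
  set G : Matrix (Fin 2) (Fin 2) k := Matrix.diagonal ![1, ε] with hG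
  set X : Matrix (Fin 2) (Fin 2) k := Matrix.single 1 0 1 with hX
  have hGpow : G ^ ℓ = 1 := by
    have hv : (![1, ε] : Fin 2 → k) ^ ℓ = 1 := by
      funext i
      fin_cases i <;> simp [hε1]
    rw [hG, Matrix.diagonal_pow, hv]
    exact Matrix.diagonal_one
  have hXpow : X ^ ℓ = 0 := by
    have h2 : X * X = 0 := by
      rw [hX, Matrix.single_mul_single_of_ne]
      exact zero_ne_one
    obtain ⟨m, hm⟩ : ∃ m, ℓ = 2 + m := ⟨ℓ - 2, by omega⟩
    rw [hm, pow_add, sq, h2, zero_mul]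
  have hcomm : G * X = ε • (X * G) := by
    ext i j
    fin_cases i <;> fin_cases j <;>
      simp [hG, hX, Matrix.mul_apply, Matrix.single, Matrix.diagonal,
        Fin.sum_univ_two, mul_comm]
  let f : FreeAlgebra k (Fin 2) →ₐ[k] Matrix (Fin 2) (Fin 2) k :=
    FreeAlgebra.lift k ![G, X]
  have hf : ∀ ⦃a b : FreeAlgebra k (Fin 2)⦄, TaftRel k ε ℓ a b → f a = f b := by
    intro a b r
    induction r with
    | g_pow => simp [f, hGpow]
    | x_pow => simp [f, hXpow]
    | comm => simp [f, hcomm]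
  let φ : Taft k ε ℓ →ₐ[k] Matrix (Fin 2) (Fin 2) k :=
    RingQuot.liftAlgHom k ⟨f, hf⟩
  have hφx : φ (Taft.x ε ℓ) = X := by
    rw [x_def]
    show (RingQuot.liftAlgHom k ⟨f, hf⟩) ((RingQuot.mkAlgHom k (TaftRel k ε ℓ)) (FreeAlgebra.ι k 1)) = X
    rw [RingQuot.liftAlgHom_mkAlgHom_apply]
    simp [f]
  intro h0
  have : X = 0 := by rw [← hφx, h0, map_zero]
  have := congrArg (fun M => M 1 0) this
  simp [hX, Matrix.single] at this

end TaftAux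

set_option maxHeartbeats 1000000 in
set_option synthInstance.maxHeartbeats 1000000 in
/-- for a primitive `ℓ`-th root of unity `ε` (`ℓ > 1`), any
`K`-`K`-bimodule map `tr : T_ℓ(ε) → K = k[g]` kills `x^i` for `1 ≤ i ≤ ℓ - 1`;
consequently `tr ((−) * x) = 0`, and no `K`-`K`-bimodule map can induce a bijection
`T → Hom_K(T, K)`, `h ↦ tr ((−) * h)` (i.e. there is no Frobenius morphism). -/
theorem taft_has_no_frobenius_morphism_over_group_algebra
    (ε : k) (ℓ : ℕ) (hℓ : 1 < ℓ) (hε : IsPrimitiveRoot ε ℓ)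
    (tr : Taft k ε ℓ → Taft.K ε ℓ)
    (hadd : ∀ h h' : Taft k ε ℓ, tr (h + h') = tr h + tr h')
    (hbimod : ∀ (a b : Taft.K ε ℓ) (h : Taft k ε ℓ), tr (↑a * h * ↑b) = a * tr h * b) :
    (∀ i : ℕ, 1 ≤ i → i ≤ ℓ - 1 → tr (Taft.x ε ℓ ^ i) = 0) ∧
    (∀ h : Taft k ε ℓ, tr (h * Taft.x ε ℓ) = 0) ∧
    ¬ ((∀ h₁ h₂ : Taft k ε ℓ,
          (∀ g' : Taft k ε ℓ, tr (g' * h₁) = tr (g' * h₂)) → h₁ = h₂) ∧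
        (∀ f : Taft k ε ℓ → Taft.K ε ℓ,
          ((∀ h h', f (h + h') = f h + f h') ∧
            (∀ (a : Taft.K ε ℓ) (h), f (↑a * h) = a * f h)) →
          ∃ h₀ : Taft k ε ℓ, ∀ g' : Taft k ε ℓ, f g' = tr (g' * h₀))) := by
  classical
  have h0 : tr 0 = 0 := by
    have := hadd 0 0
    rw [add_zero] at this
    exact (left_eq_add.mp this)
  have hsmul : ∀ (c : k) (h : Taft k ε ℓ), tr (c • h) = c • tr h := by
    intro c h
    have e : c • h = ↑((c • 1 : Taft.K ε ℓ)) * h * ↑(1 : Taft.K ε ℓ) := by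
      rw [OneMemClass.coe_one, mul_one, SetLike.val_smul, OneMemClass.coe_one,
        smul_mul_assoc, one_mul]
    rw [e, hbimod, mul_one, smul_mul_assoc, one_mul]
  have hGmem : Taft.g ε ℓ ∈ Taft.K ε ℓ := Algebra.self_mem_adjoin_singleton k _
  set G : Taft.K ε ℓ := ⟨Taft.g ε ℓ, hGmem⟩ with hGdef
  have hcent : ∀ t : Taft.K ε ℓ, (t : Taft k ε ℓ) * Taft.g ε ℓ = Taft.g ε ℓ * t := by
    intro t
    have hle : Taft.K ε ℓ ≤ Subalgebra.centralizer k {Taft.g ε ℓ} := by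
      apply Algebra.adjoin_le
      intro y hy
      rw [Set.mem_singleton_iff] at hy
      subst hy
      rw [SetLike.mem_coe, Subalgebra.mem_centralizer_iff]
      rintro z hz
      rw [Set.mem_singleton_iff] at hz
      subst hz
      rfl
    exact ((Subalgebra.mem_centralizer_iff k).mp (hle t.2) (Taft.g ε ℓ) rfl).symm
  have hGpow : G ^ ℓ = 1 := by
    apply Subtype.ext
    push_cast
    exact TaftAux.g_pow ε ℓ
  have hGmpow : ∀ m : ℕ, ((G ^ m : Taft.K ε ℓ) : Taft k ε ℓ) = Taft.g ε ℓ ^ m := by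
    intro m
    push_cast
    rfl
  have part1 : ∀ i : ℕ, 1 ≤ i → i ≤ ℓ - 1 → tr (Taft.x ε ℓ ^ i) = 0 := by
    intro i h1 h2
    have hA : G * tr (Taft.x ε ℓ ^ i) = tr (Taft.g ε ℓ * Taft.x ε ℓ ^ i) := by
      have := hbimod G 1 (Taft.x ε ℓ ^ i)
      rw [OneMemClass.coe_one, mul_one, mul_one] at this
      exact this.symm
    have hB : tr (Taft.x ε ℓ ^ i) * G = tr (Taft.x ε ℓ ^ i * Taft.g ε ℓ) := by
      have := hbimod 1 G (Taft.x ε ℓ ^ i)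
      rw [OneMemClass.coe_one, one_mul, one_mul] at this
      exact this.symm
    have e : G * tr (Taft.x ε ℓ ^ i) = (ε ^ i) • (tr (Taft.x ε ℓ ^ i) * G) := by
      rw [hA, TaftAux.g_xpow, hsmul, ← hB]
    have hcomm : G * tr (Taft.x ε ℓ ^ i) = tr (Taft.x ε ℓ ^ i) * G := by
      apply Subtype.ext
      push_cast
      exact (hcent (tr (Taft.x ε ℓ ^ i))).symm
    rw [hcomm] at e
    have e3 : (1 - ε ^ i) • (tr (Taft.x ε ℓ ^ i) * G) = 0 := by
      apply Subtype.ext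
      push_cast
      rw [sub_smul, one_smul, sub_eq_zero]
      have e' := congrArg Subtype.val e
      push_cast at e'
      exact e'
    have hne : (1 - ε ^ i) ≠ 0 :=
      sub_ne_zero.mpr (Ne.symm (hε.pow_ne_one_of_pos_of_lt (by omega) (by omega)))
    have e4 : tr (Taft.x ε ℓ ^ i) * G = 0 := by
      rcases smul_eq_zero.mp e3 with h | h
      · exact absurd h hne
      · exact h
    have e5 : tr (Taft.x ε ℓ ^ i) = tr (Taft.x ε ℓ ^ i) * G ^ ℓ := by
      rw [hGpow, mul_one]
    obtain ⟨m, hm⟩ : ∃ m, ℓ = 1 + m := ⟨ℓ - 1, by omega⟩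
    have hG2 : G ^ ℓ = G * G ^ m := by
      have hpow : ∀ n : ℕ, n = 1 + m → G ^ n = G * G ^ m := by
        intro n hn
        subst hn
        rw [pow_add, pow_one]
      exact hpow ℓ hm
    rw [e5, hG2, ← mul_assoc, e4, zero_mul]
  have key : ∀ m i : ℕ, tr (Taft.x ε ℓ ^ i * Taft.g ε ℓ ^ m * Taft.x ε ℓ) = 0 := by
    intro m i
    have c1 : Taft.g ε ℓ ^ m * Taft.x ε ℓ = (ε ^ m) • (Taft.x ε ℓ * Taft.g ε ℓ ^ m) := by
      have := TaftAux.gpow_xpow ε ℓ m 1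
      simpa using this
    have e : Taft.x ε ℓ ^ i * Taft.g ε ℓ ^ m * Taft.x ε ℓ
        = (ε ^ m) • (Taft.x ε ℓ ^ (i + 1) * Taft.g ε ℓ ^ m) := by
      rw [mul_assoc, c1, mul_smul_comm, ← mul_assoc, ← pow_succ]
    rw [e, hsmul]
    have e2 : tr (Taft.x ε ℓ ^ (i + 1) * Taft.g ε ℓ ^ m) = tr (Taft.x ε ℓ ^ (i + 1)) * G ^ m := by
      have := hbimod 1 (G ^ m) (Taft.x ε ℓ ^ (i + 1))
      rw [OneMemClass.coe_one, one_mul, one_mul, hGmpow] at this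
      exact this
    by_cases hc : i + 1 ≤ ℓ - 1
    · rw [e2, part1 (i + 1) (by omega) hc, zero_mul, smul_zero]
    · have hx0 : Taft.x ε ℓ ^ (i + 1) = 0 := by
        obtain ⟨m', hm'⟩ : ∃ m', i + 1 = ℓ + m' := ⟨i + 1 - ℓ, by omega⟩
        rw [hm', pow_add, TaftAux.x_pow, zero_mul]
      rw [hx0, zero_mul, h0, smul_zero]
  have hspan : ∀ h : Taft k ε ℓ,
      h ∈ Submodule.span k {y : Taft k ε ℓ | ∃ i m : ℕ, y = Taft.x ε ℓ ^ i * Taft.g ε ℓ ^ m} := by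
    set S := Submodule.span k
      {y : Taft k ε ℓ | ∃ i m : ℕ, y = Taft.x ε ℓ ^ i * Taft.g ε ℓ ^ m} with hS
    have hgen : ∀ i m : ℕ, Taft.x ε ℓ ^ i * Taft.g ε ℓ ^ m ∈ S :=
      fun i m => Submodule.subset_span ⟨i, m, rfl⟩
    have hmulgen : ∀ (i m : ℕ) (b : Taft k ε ℓ), b ∈ S → (Taft.x ε ℓ ^ i * Taft.g ε ℓ ^ m) * b ∈ S := by
      intro i m b hb
      induction hb using Submodule.span_induction with
      | mem y hy =>
        obtain ⟨j, n, rfl⟩ := hy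
        have e : (Taft.x ε ℓ ^ i * Taft.g ε ℓ ^ m) * (Taft.x ε ℓ ^ j * Taft.g ε ℓ ^ n)
            = (ε ^ (m * j)) • (Taft.x ε ℓ ^ (i + j) * Taft.g ε ℓ ^ (m + n)) := by
          rw [mul_assoc, ← mul_assoc (Taft.g ε ℓ ^ m), TaftAux.gpow_xpow, smul_mul_assoc,
            mul_smul_comm, mul_assoc, ← mul_assoc (Taft.x ε ℓ ^ i), ← pow_add, ← pow_add]
        rw [e]
        exact Submodule.smul_mem _ _ (hgen _ _)
      | zero =>
        rw [mul_zero]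
        exact Submodule.zero_mem S
      | add y z _ _ hy hz =>
        rw [mul_add]
        exact Submodule.add_mem S hy hz
      | smul c y _ hy =>
        rw [mul_smul_comm]
        exact Submodule.smul_mem S c hy
    have hmul : ∀ a, a ∈ S → ∀ b, b ∈ S → a * b ∈ S := by
      intro a ha
      induction ha using Submodule.span_induction with
      | mem y hy =>
        obtain ⟨i, m, rfl⟩ := hy
        intro b hb
        exact hmulgen i m b hb
      | zero =>
        intro b hb
        rw [zero_mul]
        exact Submodule.zero_mem S
      | add y z _ _ hy hz =>
        intro b hb
        rw [add_mul]
        exact Submodule.add_mem S (hy b hb) (hz b hb)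
      | smul c y _ hy =>
        intro b hb
        rw [smul_mul_assoc]
        exact Submodule.smul_mem S c (hy b hb)
    intro h
    obtain ⟨z, rfl⟩ := RingQuot.mkAlgHom_surjective k (TaftRel k ε ℓ) h
    induction z using FreeAlgebra.induction with
    | grade0 r =>
      have e : RingQuot.mkAlgHom k (TaftRel k ε ℓ) (algebraMap k _ r)
          = r • (Taft.x ε ℓ ^ 0 * Taft.g ε ℓ ^ 0) := by
        rw [AlgHom.commutes, pow_zero, pow_zero, mul_one, Algebra.smul_def, mul_one]
      rw [e]
      exact Submodule.smul_mem S r (hgen 0 0)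
    | grade1 v =>
      fin_cases v
      · have e : RingQuot.mkAlgHom k (TaftRel k ε ℓ) (FreeAlgebra.ι k (0 : Fin 2))
            = Taft.x ε ℓ ^ 0 * Taft.g ε ℓ ^ 1 := by
          rw [← TaftAux.g_def, pow_zero, pow_one, one_mul]
        show RingQuot.mkAlgHom k (TaftRel k ε ℓ) (FreeAlgebra.ι k (0 : Fin 2)) ∈ S
        rw [e]
        exact hgen 0 1
      · have e : RingQuot.mkAlgHom k (TaftRel k ε ℓ) (FreeAlgebra.ι k (1 : Fin 2))
            = Taft.x ε ℓ ^ 1 * Taft.g ε ℓ ^ 0 := by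
          rw [← TaftAux.x_def, pow_zero, pow_one, mul_one]
        show RingQuot.mkAlgHom k (TaftRel k ε ℓ) (FreeAlgebra.ι k (1 : Fin 2)) ∈ S
        rw [e]
        exact hgen 1 0
    | mul a b iha ihb =>
      rw [map_mul]
      exact hmul _ iha _ ihb
    | add a b iha ihb =>
      rw [map_add]
      exact Submodule.add_mem S iha ihb
  have part2 : ∀ h : Taft k ε ℓ, tr (h * Taft.x ε ℓ) = 0 := by
    intro h
    have hh := hspan h
    induction hh using Submodule.span_induction with
    | mem y hy =>
      obtain ⟨i, m, rfl⟩ := hy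
      exact key m i
    | zero => rw [zero_mul, h0]
    | add y z _ _ hy hz => rw [add_mul, hadd, hy, hz, add_zero]
    | smul c y _ hy => rw [smul_mul_assoc, hsmul, hy, smul_zero]
  refine ⟨part1, part2, ?_⟩
  rintro ⟨hinj, -⟩
  have hx0 : Taft.x ε ℓ = 0 :=
    hinj (Taft.x ε ℓ) 0 (fun g' => by rw [part2 g', mul_zero, h0])
  exact TaftAux.x_ne_zero ε ℓ hℓ hε.pow_eq_one hx0
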